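/- Let G̃ be a universal central extension of a perfect group G with kernel K = H₂(G), let G' be a perfect central extension of G with kernel D (for instance the universal cover of a Lie group G with D = π₁(G)). Then G̃ is also a universal central extension of G': the composite G̃ → G' → G exhibits G̃ → G' as a central extension, and for every central extension E → G' there exists a unique homomorphism G̃ → E over G'. -/

import Mathlib

universe u

open scoped commutatorElement

/-- If `q : E →* G'` is a central extension and `G'` is perfect, then any element of `E`
whose image is central in `G'` is central in `E`. -/
theorem aux_central {E G' : Type u} [Group E] [Group G'] (q : E →* G')
    (hqs : Function.Surjective q) (hqc : q.ker ≤ Subgroup.center E)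
    (hG'perf : commutator G' = ⊤) (x : E) (hx : q x ∈ Subgroup.center G') :
    x ∈ Subgroup.center E := by
  have hf : ∀ y : E, ⁅x, y⁆ ∈ Subgroup.center E := by
    intro y
    apply hqc
    have : q ⁅x, y⁆ = ⁅q x, q y⁆ := map_commutatorElement q x y
    rw [MonoidHom.mem_ker, this, commutatorElement_eq_one_iff_commute]
    exact (Subgroup.mem_center_iff.mp hx (q y)).symm
  have hmul : ∀ y z : E, ⁅x, y * z⁆ = ⁅x, y⁆ * ⁅x, z⁆ := by
    intro y z
    have h1 : ⁅x, y * z⁆ = ⁅x, y⁆ * (y * ⁅x, z⁆ * y⁻¹) := by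
      simp only [commutatorElement_def]; group
    have h2 : y * ⁅x, z⁆ * y⁻¹ = ⁅x, z⁆ := by
      rw [Subgroup.mem_center_iff.mp (hf z) y]; group
    rw [h1, h2]
  have hinv : ∀ y : E, ⁅x, y⁻¹⁆ = ⁅x, y⁆⁻¹ := by
    intro y
    have := hmul y y⁻¹
    simp only [mul_inv_cancel, commutatorElement_one_right] at this
    exact (inv_eq_of_mul_eq_one_right this.symm).symm
  have hcomm : ∀ a b : E, Commute x ⁅a, b⁆ := by
    intro a b
    rw [← commutatorElement_eq_one_iff_commute]
    have : ⁅x, ⁅a, b⁆⁆ = ⁅x, a⁆ * ⁅x, b⁆ * ⁅x, a⁆⁻¹ * ⁅x, b⁆⁻¹ := by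
      rw [commutatorElement_def a b, hmul, hmul, hmul, hinv, hinv, mul_assoc]
    rw [this, ← Subgroup.mem_center_iff.mp (hf a) ⁅x, b⁆]
    group
  have hcent : commutator E ≤ Subgroup.centralizer {x} := by
    rw [commutator, Subgroup.commutator_le]
    intro a _ b _
    rw [Subgroup.mem_centralizer_singleton_iff]
    exact (hcomm a b).symm
  rw [Subgroup.mem_center_iff]
  intro y
  have hmap : Subgroup.map q (commutator E) = ⊤ := by
    rw [commutator, Subgroup.map_commutator, Subgroup.map_top_of_surjective q hqs,
      ← commutator, hG'perf]
  have : q y ∈ Subgroup.map q (commutator E) := by rw [hmap]; trivial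
  obtain ⟨c, hc, hcy⟩ := this
  have hz : c⁻¹ * y ∈ q.ker := by
    rw [MonoidHom.mem_ker, map_mul, map_inv, hcy, inv_mul_cancel]
  have hcx : c * x = x * c := (hcent hc x rfl).symm
  have hzx : (c⁻¹ * y) * x = x * (c⁻¹ * y) := Subgroup.mem_center_iff.mp (hqc hz) x |>.symm
  calc y * x = c * ((c⁻¹ * y) * x) := by group
    _ = c * (x * (c⁻¹ * y)) := by rw [hzx]
    _ = (c * x) * (c⁻¹ * y) := by group
    _ = x * y := by rw [hcx]; group

/-- If G̃ is a universal central extension of a perfect group G and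
G' is a perfect central extension of G, with Φ : G̃ → G' the surjection over G, then
Φ : G̃ → G' is itself a central extension, and G̃ is a universal central extension
of G': for every central extension E → G' there is a unique homomorphism G̃ → E
over G'. -/
theorem stmt19 {Gt G G' : Type u} [Group Gt] [Group G] [Group G']
    (π : Gt →* G) (hπs : Function.Surjective π) (hπc : π.ker ≤ Subgroup.center Gt)
    (hGperf : commutator G = ⊤) (hGtperf : commutator Gt = ⊤)
    (huniv : ∀ (L : Type u) [Group L] (ρ : L →* G),
      Function.Surjective ρ → ρ.ker ≤ Subgroup.center L →
        ∃! φ : Gt →* L, ρ.comp φ = π)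
    (p : G' →* G) (hps : Function.Surjective p) (hpc : p.ker ≤ Subgroup.center G')
    (hG'perf : commutator G' = ⊤)
    (Φ : Gt →* G') (hΦ : p.comp Φ = π) (hΦs : Function.Surjective Φ) :
    Φ.ker ≤ Subgroup.center Gt ∧
    ∀ (E : Type u) [Group E] (q : E →* G'),
      Function.Surjective q → q.ker ≤ Subgroup.center E →
        ∃! ψ : Gt →* E, q.comp ψ = Φ := by
  constructor
  · intro x hx
    apply hπc
    rw [MonoidHom.mem_ker, ← hΦ, MonoidHom.comp_apply, MonoidHom.mem_ker.mp hx, map_one]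
  · intro E _ q hqs hqc
    have hρs : Function.Surjective (p.comp q) := hps.comp hqs
    have hρc : (p.comp q).ker ≤ Subgroup.center E := by
      intro x hx
      exact aux_central q hqs hqc hG'perf x (hpc (MonoidHom.mem_ker.mpr hx))
    obtain ⟨ψ, hψ, huniq⟩ := huniv E (p.comp q) hρs hρc
    refine ⟨ψ, ?_, ?_⟩
    · exact (huniv G' p hps hpc).unique
        (by rw [← MonoidHom.comp_assoc, hψ]) hΦ
    · intro ψ' hψ'
      exact huniq ψ' (by show (p.comp q).comp ψ' = π; rw [MonoidHom.comp_assoc, hψ', hΦ])
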